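/- arXiv:1804.01395 — 3 statements merged into one kernel-verified Lean document; each statement's English description precedes it below -/
import Mathlib

section
/- Let C ⊂ (ℂ*)² be the smooth part of the zero set of P ∈ ℂ[X^{±1},Y^{±1}], μ(x,y) = (log|x|, log|y|) the amoeba map, and γ(x,y) = [x ∂_x P(x,y) : y ∂_y P(x,y)] ∈ ℙ¹(ℂ) the logarithmic Gauss map. Then for z ∈ C, the differential d_z μ (as a real-linear map from the real 2-dimensional tangent space T_z C to ℝ²) is non-invertible if and only if γ(z) ∈ ℙ¹(ℝ). -/
open MvPolynomial

/-- Let `z` be a smooth point of the zero set of `P` in `(ℂ*)²`, with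
`A = x ∂ₓP(z)`, `B = y ∂_yP(z)`. In logarithmic coordinates the tangent space is
`T_zC = {(u,v) : A u + B v = 0}` and the differential of the amoeba map
`μ(x,y) = (log|x|, log|y|)` is `(u,v) ↦ (Re u, Re v)`. Then `d_zμ` is non-invertible
(i.e. has nontrivial kernel on the 2-real-dimensional space `T_zC`) if and only if the
logarithmic Gauss map value `γ(z) = [A : B]` lies in `ℙ¹(ℝ)` (i.e. `[A : B]` admits a
representative with real homogeneous coordinates). -/
theorem amoeba_differential_noninvertible_iff_gauss_real
    (P : MvPolynomial (Fin 2) ℂ) (z : ℂ × ℂ) (hz1 : z.1 ≠ 0) (hz2 : z.2 ≠ 0)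
    (hz : eval ![z.1, z.2] P = 0)
    (A B : ℂ)
    (hA : A = z.1 * eval ![z.1, z.2] (pderiv 0 P))
    (hB : B = z.2 * eval ![z.1, z.2] (pderiv 1 P))
    (hsm : ¬ (A = 0 ∧ B = 0)) :
    (∃ u v : ℂ, (u, v) ≠ (0, 0) ∧ A * u + B * v = 0 ∧ u.re = 0 ∧ v.re = 0)
      ↔ (∃ s t : ℝ, (s, t) ≠ (0, 0) ∧ A * (t : ℂ) = B * (s : ℂ)) := by
  constructor
  · rintro ⟨u, v, hne, heq, hu, hv⟩
    refine ⟨v.im, -u.im, ?_, ?_⟩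
    · intro h
      rw [Prod.mk.injEq] at h
      exact hne (by
        rw [Prod.mk.injEq]
        constructor
        · apply Complex.ext <;> simp [hu, neg_eq_zero.mp h.2]
        · apply Complex.ext <;> simp [hv, h.1])
    · have hu' : u = Complex.I * u.im := by apply Complex.ext <;> simp [hu]
      have hv' : v = Complex.I * v.im := by apply Complex.ext <;> simp [hv]
      rw [hu', hv'] at heq
      push_cast
      linear_combination Complex.I * heq - (A * (u.im:ℂ) + B * (v.im:ℂ)) * Complex.I_sq
  · rintro ⟨s, t, hne, heq⟩
    refine ⟨t * Complex.I, -s * Complex.I, ?_, ?_, by simp, by simp⟩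
    · intro h
      rw [Prod.mk.injEq] at h
      exact hne (by
        rw [Prod.mk.injEq]
        constructor
        · simpa [Complex.ext_iff] using h.2
        · simpa [Complex.ext_iff] using h.1)
    · push_cast
      linear_combination Complex.I * heq
end

section
/- A point (x,y) ∈ C is a zero of the 1-form η restricted to C (equivalently a critical point of any volume function V) if and only if log|x| · x ∂_x P(x,y) + log|y| · y ∂_y P(x,y) = 0. -/
open MvPolynomial

/-- A smooth point `z = (x,y)` of `{P=0} ⊂ (ℂ*)²` is a zero of the restriction of
`η = log|y| d(arg x) − log|x| d(arg y)` to the curve (equivalently, a critical point of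
any volume function) if and only if
`log|x| · x∂ₓP(z) + log|y| · y∂_yP(z) = 0`. Here, in logarithmic coordinates, the tangent
space is `{(u,v) : A u + B v = 0}` and `η(u,v) = log|y| Im u − log|x| Im v`. -/
theorem critical_point_iff
    (P : MvPolynomial (Fin 2) ℂ) (z : ℂ × ℂ) (hz1 : z.1 ≠ 0) (hz2 : z.2 ≠ 0)
    (hz : eval ![z.1, z.2] P = 0)
    (A B : ℂ)
    (hA : A = z.1 * eval ![z.1, z.2] (pderiv 0 P))
    (hB : B = z.2 * eval ![z.1, z.2] (pderiv 1 P))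
    (hsm : ¬ (A = 0 ∧ B = 0)) :
    (∀ u v : ℂ, A * u + B * v = 0 →
        Real.log (‖z.2‖) * u.im - Real.log (‖z.1‖) * v.im = 0)
      ↔ (Real.log (‖z.1‖) : ℂ) * A + (Real.log (‖z.2‖) : ℂ) * B = 0 := by
  set a := Real.log (‖z.1‖) with ha
  set b := Real.log (‖z.2‖) with hb
  have imkey : ∀ u v : ℂ, b * u.im - a * v.im = ((b : ℂ) * u - (a : ℂ) * v).im := by
    intro u v
    simp [Complex.sub_im, Complex.mul_im]
  set c : ℂ := (a : ℂ) * A + (b : ℂ) * B with hc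
  constructor
  · intro h
    have key := h (Complex.I * (starRingEnd ℂ) c * B) (-(Complex.I * (starRingEnd ℂ) c * A))
      (by ring)
    rw [imkey] at key
    have heq : (b : ℂ) * (Complex.I * (starRingEnd ℂ) c * B)
        - (a : ℂ) * (-(Complex.I * (starRingEnd ℂ) c * A))
        = Complex.I * ((starRingEnd ℂ) c * c) := by
      rw [hc]; ring
    rw [heq] at key
    have hcc : (starRingEnd ℂ) c * c = (Complex.normSq c : ℂ) := by
      rw [mul_comm, Complex.mul_conj]
    rw [hcc] at key
    simp only [Complex.mul_im, Complex.I_re, Complex.I_im, Complex.ofReal_re,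
      Complex.ofReal_im] at key
    have : Complex.normSq c = 0 := by linarith
    exact Complex.normSq_eq_zero.mp this
  · intro hc0 u v huv
    have hAw : A * ((b : ℂ) * u - (a : ℂ) * v)
        = (b : ℂ) * (A * u + B * v) - v * c := by rw [hc]; ring
    have hBw : B * ((b : ℂ) * u - (a : ℂ) * v)
        = u * c - (a : ℂ) * (A * u + B * v) := by rw [hc]; ring
    rw [huv, hc0] at hAw hBw
    simp only [mul_zero, zero_mul, sub_zero, zero_sub, neg_zero, mul_zero, sub_self] at hAw hBw
    have hw : (b : ℂ) * u - (a : ℂ) * v = 0 := by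
      rcases not_and_or.mp hsm with hA0 | hB0
      · exact (mul_eq_zero.mp hAw).resolve_left hA0
      · exact (mul_eq_zero.mp hBw).resolve_left hB0
    rw [imkey, hw, Complex.zero_im]
end

section
/- Let z be an ideal point of the smooth projective model Ĉ of the curve {P=0}, with Newton–Puiseux local coordinate x = t^p, y = t^q F(t) (p,q coprime, F(0) ≠ 0). Then the integral of η over a small positively-oriented circle C_ρ of radius ρ around z tends to 2π p log|F(0)| = 2π log|{x,y}_z| as ρ → 0. In particular η is exact in a punctured neighborhood of z with a continuous extension to z if and only if |{x,y}_z| = 1. -/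
/-- `η = log|y| d(arg x) − log|x| d(arg y)` as a continuous `ℝ`-linear functional. -/
noncomputable def etaL (p : ℂ × ℂ) : (ℂ × ℂ) →L[ℝ] ℝ :=
  Real.log (norm p.2) •
      (Complex.imCLM.comp ((p.1⁻¹ • ContinuousLinearMap.fst ℂ ℂ ℂ).restrictScalars ℝ)) -
    Real.log (norm p.1) •
      (Complex.imCLM.comp ((p.2⁻¹ • ContinuousLinearMap.snd ℂ ℂ ℂ).restrictScalars ℝ))

lemma etaL_apply (x y v w : ℂ) :
    etaL (x, y) (v, w) =
      Real.log (norm y) * (x⁻¹ * v).im - Real.log (norm x) * (y⁻¹ * w).im := by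
  simp [etaL, ContinuousLinearMap.smul_apply, smul_eq_mul]

/-- Near an ideal point with Newton–Puiseux coordinates `x = t^p`, `y = t^q F(t)`
(`F(0) ≠ 0`), the integral of `η` over the positively oriented circle of radius `ρ`
tends to `2π p log|F(0)|` as `ρ → 0⁺`. In particular this period vanishes (so `η` is
exact near the ideal point, with a continuous extension of its primitive) if and only if
the tame symbol `{x,y}_z = (−1)^{pq} F(0)^{−p}` has modulus `1`. -/
theorem eta_circle_period (p q : ℤ) (F : ℂ → ℂ) (r : ℝ) (hr : 0 < r)
    (hF : ∀ t ∈ Metric.ball (0 : ℂ) r, AnalyticAt ℂ F t) (hF0 : F 0 ≠ 0) :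
    Filter.Tendsto (fun ρ : ℝ =>
        ∫ θ in (0 : ℝ)..(2 * Real.pi),
          etaL (((ρ : ℂ) * Complex.exp (θ * Complex.I)) ^ p,
                ((ρ : ℂ) * Complex.exp (θ * Complex.I)) ^ q
                  * F ((ρ : ℂ) * Complex.exp (θ * Complex.I)))
            ((p : ℂ) * ((ρ : ℂ) * Complex.exp (θ * Complex.I)) ^ p * Complex.I,
             ((q : ℂ) * F ((ρ : ℂ) * Complex.exp (θ * Complex.I))
                + ((ρ : ℂ) * Complex.exp (θ * Complex.I))
                  * deriv F ((ρ : ℂ) * Complex.exp (θ * Complex.I)))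
               * ((ρ : ℂ) * Complex.exp (θ * Complex.I)) ^ q * Complex.I))
      (nhdsWithin 0 (Set.Ioo 0 r))
      (nhds (2 * Real.pi * p * Real.log (norm (F 0)))) ∧
    ((2 * Real.pi * p * Real.log (norm (F 0)) = 0) ↔
      norm ((-1 : ℂ) ^ (p * q) * F 0 ^ (-p)) = 1) := by
  constructor
  · -- the limit statement
    -- choose δ0 so that |F t - F 0| < |F 0| on |t| < δ0
    have hF0abs : 0 < norm (F 0) := norm_pos_iff.mpr hF0
    have hcF : ContinuousAt F 0 := (hF 0 (by simpa using hr)).continuousAt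
    rw [Metric.continuousAt_iff] at hcF
    obtain ⟨δ0, hδ0, hδ⟩ := hcF (norm (F 0)) hF0abs
    set δ : ℝ := min δ0 r with hδdef
    have hδpos : 0 < δ := lt_min hδ0 hr
    -- basic facts for |t| < δ
    have hclose : ∀ t : ℂ, norm t < δ → norm (F t - F 0) < norm (F 0) := by
      intro t ht
      have : dist t 0 < δ0 := by simpa [Complex.dist_eq] using ht.trans_le (min_le_left _ _)
      simpa [Complex.dist_eq] using hδ this
    have hFne : ∀ t : ℂ, norm t < δ → F t ≠ 0 := by
      intro t ht h0
      have := hclose t ht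
      simp [h0] at this
    have hslit : ∀ t : ℂ, norm t < δ → F t / F 0 ∈ Complex.slitPlane := by
      intro t ht
      refine Complex.mem_slitPlane_iff.2 (Or.inl ?_)
      have h1 : norm (F t / F 0 - 1) < 1 := by
        rw [show F t / F 0 - 1 = (F t - F 0) / F 0 by field_simp]
        rw [norm_div, div_lt_one hF0abs]
        exact hclose t ht
      have h2 : |(F t / F 0 - 1).re| ≤ norm (F t / F 0 - 1) := Complex.abs_re_le_norm _
      have h3 : (F t / F 0 - 1).re = (F t / F 0).re - 1 := by simp
      nlinarith [abs_le.1 h2]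
    set A : ℂ → ℂ := fun t => Complex.log (F t / F 0) with hAdef
    have hA0 : A 0 = 0 := by simp [hAdef, div_self hF0]
    -- main claim: for ρ ∈ Ioo 0 δ the integral is constant
    have main : ∀ ρ : ℝ, ρ ∈ Set.Ioo (0:ℝ) δ →
        (∫ θ in (0 : ℝ)..(2 * Real.pi),
          etaL (((ρ : ℂ) * Complex.exp (θ * Complex.I)) ^ p,
                ((ρ : ℂ) * Complex.exp (θ * Complex.I)) ^ q
                  * F ((ρ : ℂ) * Complex.exp (θ * Complex.I)))
            ((p : ℂ) * ((ρ : ℂ) * Complex.exp (θ * Complex.I)) ^ p * Complex.I,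
             ((q : ℂ) * F ((ρ : ℂ) * Complex.exp (θ * Complex.I))
                + ((ρ : ℂ) * Complex.exp (θ * Complex.I))
                  * deriv F ((ρ : ℂ) * Complex.exp (θ * Complex.I)))
               * ((ρ : ℂ) * Complex.exp (θ * Complex.I)) ^ q * Complex.I))
        = 2 * Real.pi * p * Real.log (norm (F 0)) := by
      intro ρ hρ
      obtain ⟨hρ0, hρδ⟩ := hρ
      have hcm : ∀ θ : ℝ, (ρ : ℂ) * Complex.exp (θ * Complex.I) = circleMap 0 ρ θ := by
        intro θ; simp [circleMap]
      have habs_t : ∀ θ : ℝ, norm (circleMap 0 ρ θ) = ρ := by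
        intro θ; rw [norm_circleMap_zero]; exact abs_of_pos hρ0
      have htδ : ∀ θ : ℝ, norm (circleMap 0 ρ θ) < δ := by
        intro θ; rw [habs_t]; exact hρδ
      have htr : ∀ θ : ℝ, circleMap 0 ρ θ ∈ Metric.ball (0:ℂ) r := by
        intro θ
        simp only [Metric.mem_ball, Complex.dist_eq, sub_zero]
        exact lt_of_lt_of_le ((habs_t θ) ▸ hρδ) (min_le_right _ _)
      have htne : ∀ θ : ℝ, circleMap 0 ρ θ ≠ 0 := by
        intro θ h0
        have h := habs_t θ
        rw [h0] at h
        simp at h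
        exact hρ0.ne' h.symm
      -- pointwise value of the integrand
      have point : ∀ θ : ℝ,
          etaL ((circleMap 0 ρ θ) ^ p, (circleMap 0 ρ θ) ^ q * F (circleMap 0 ρ θ))
            ((p : ℂ) * (circleMap 0 ρ θ) ^ p * Complex.I,
             ((q : ℂ) * F (circleMap 0 ρ θ)
                + circleMap 0 ρ θ * deriv F (circleMap 0 ρ θ)) * (circleMap 0 ρ θ) ^ q
               * Complex.I)
          = (p : ℝ) * Real.log (norm (F 0)) + (p : ℝ) * (A (circleMap 0 ρ θ)).re
            - ((p : ℝ) * Real.log ρ)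
              * (circleMap 0 ρ θ * deriv F (circleMap 0 ρ θ) / F (circleMap 0 ρ θ)).re := by
        intro θ
        set t : ℂ := circleMap 0 ρ θ with htdef
        have ht0 : t ≠ 0 := htne θ
        have hFt : F t ≠ 0 := hFne t (htδ θ)
        have hxne : t ^ p ≠ 0 := zpow_ne_zero _ ht0
        have hyq : t ^ q ≠ 0 := zpow_ne_zero _ ht0
        rw [etaL_apply]
        have hx : (t ^ p)⁻¹ * ((p : ℂ) * t ^ p * Complex.I) = (p : ℂ) * Complex.I := by
          field_simp
        have hy : (t ^ q * F t)⁻¹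
            * (((q : ℂ) * F t + t * deriv F t) * t ^ q * Complex.I)
            = ((q : ℂ) + t * deriv F t / F t) * Complex.I := by
          field_simp
        rw [hx, hy]
        have him1 : ((p : ℂ) * Complex.I).im = (p : ℝ) := by
          simp [Complex.mul_I_im]
        have him2 : (((q : ℂ) + t * deriv F t / F t) * Complex.I).im
            = (q : ℝ) + (t * deriv F t / F t).re := by
          simp [Complex.mul_I_im]
        rw [him1, him2]
        have hlogx : Real.log (norm (t ^ p)) = (p : ℝ) * Real.log ρ := by
          rw [norm_zpow, habs_t θ, Real.log_zpow]
        have hlogFt : Real.log (norm (F t))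
            = Real.log (norm (F 0)) + (A t).re := by
          have hexp : Complex.exp (A t) = F t / F 0 :=
            Complex.exp_log (div_ne_zero hFt hF0)
          have : Real.exp ((A t).re) = norm (F t) / norm (F 0) := by
            rw [← Complex.norm_exp, hexp, norm_div]
          have hre : (A t).re
              = Real.log (norm (F t)) - Real.log (norm (F 0)) := by
            rw [← Real.log_exp ((A t).re), this,
              Real.log_div (norm_ne_zero_iff.mpr hFt) hF0abs.ne']
          rw [hre]; ring
        have hlogy : Real.log (norm (t ^ q * F t))
            = (q : ℝ) * Real.log ρ + Real.log (norm (F t)) := by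
          rw [norm_mul, norm_zpow, habs_t θ,
            Real.log_mul (zpow_ne_zero _ hρ0.ne') (norm_ne_zero_iff.mpr hFt),
            Real.log_zpow]
        rw [hlogx, hlogy, hlogFt]
        ring
      -- continuity facts
      have hcont_t : Continuous (circleMap 0 ρ) := continuous_circleMap 0 ρ
      have hcontA : Continuous fun θ : ℝ => A (circleMap 0 ρ θ) := by
        rw [continuous_iff_continuousAt]
        intro θ
        have h1 : ContinuousAt F (circleMap 0 ρ θ) := (hF _ (htr θ)).continuousAt
        have h2 : ContinuousAt (fun z => F z / F 0) (circleMap 0 ρ θ) :=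
          h1.div_const _
        have h3 : ContinuousAt (fun z => Complex.log (F z / F 0)) (circleMap 0 ρ θ) :=
          h2.clog (hslit _ (htδ θ))
        exact h3.comp hcont_t.continuousAt
      have hcontR : Continuous fun θ : ℝ =>
          (circleMap 0 ρ θ * deriv F (circleMap 0 ρ θ) / F (circleMap 0 ρ θ)).re := by
        rw [continuous_iff_continuousAt]
        intro θ
        have h1 : ContinuousAt F (circleMap 0 ρ θ) := (hF _ (htr θ)).continuousAt
        have h2 : ContinuousAt (deriv F) (circleMap 0 ρ θ) := by
          have hfd : ContinuousAt (fderiv ℂ F) (circleMap 0 ρ θ) :=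
            ((hF _ (htr θ)).fderiv).continuousAt
          have : ContinuousAt (fun z => (fderiv ℂ F z : ℂ → ℂ) 1) (circleMap 0 ρ θ) :=
            ((ContinuousLinearMap.apply ℂ ℂ (1:ℂ)).continuous.continuousAt).comp hfd
          exact this.congr (by filter_upwards with z using fderiv_apply_one_eq_deriv)
        exact (Complex.continuous_re.continuousAt).comp
          (((hcont_t.continuousAt.mul (h2.comp hcont_t.continuousAt)).div
            (h1.comp hcont_t.continuousAt) (hFne _ (htδ θ))))
      -- Cauchy mean value: ∫ A(circleMap θ) dθ = 0
      have hAmean : (∫ θ in (0:ℝ)..(2 * Real.pi), A (circleMap 0 ρ θ)) = 0 := by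
        have hdiff : DiffContOnCl ℂ A (Metric.ball (0:ℂ) ρ) := by
          have hd : DifferentiableOn ℂ A (Metric.closedBall (0:ℂ) ρ) := by
            intro z hz
            have hzδ : norm z < δ := by
              have : norm z ≤ ρ := by
                simpa [Complex.dist_eq] using hz
              exact lt_of_le_of_lt this hρδ
            have hzr : z ∈ Metric.ball (0:ℂ) r := by
              simp only [Metric.mem_ball, Complex.dist_eq, sub_zero]
              exact lt_of_lt_of_le hzδ (min_le_right _ _)
            exact (((hF z hzr).differentiableAt.div_const (F 0)).clog
              (hslit z hzδ)).differentiableWithinAt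
          exact ⟨hd.mono Metric.ball_subset_closedBall,
            by rw [closure_ball _ hρ0.ne']; exact hd.continuousOn⟩
        have hC := hdiff.circleIntegral_sub_inv_smul (Metric.mem_ball_self hρ0)
        rw [hA0, smul_zero] at hC
        have hunfold : (∮ z in C(0, ρ), (z - 0)⁻¹ • A z)
            = ∫ θ in (0:ℝ)..(2 * Real.pi),
                deriv (circleMap 0 ρ) θ • ((circleMap 0 ρ θ - 0)⁻¹ • A (circleMap 0 ρ θ)) := rfl
        have hC2 : (∫ θ in (0:ℝ)..(2 * Real.pi),
            deriv (circleMap 0 ρ) θ • ((circleMap 0 ρ θ - 0)⁻¹ • A (circleMap 0 ρ θ))) = 0 :=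
          hunfold.symm.trans hC
        have hC' : (∫ θ in (0:ℝ)..(2 * Real.pi),
            Complex.I * A (circleMap 0 ρ θ)) = 0 := by
          refine Eq.trans (intervalIntegral.integral_congr ?_) hC2
          intro θ _
          have ht0 : circleMap 0 ρ θ ≠ 0 := htne θ
          simp only [deriv_circleMap, smul_eq_mul, sub_zero]
          field_simp
        rw [intervalIntegral.integral_const_mul] at hC'
        exact (mul_eq_zero.1 hC').resolve_left Complex.I_ne_zero
      have hAre : (∫ θ in (0:ℝ)..(2 * Real.pi), (A (circleMap 0 ρ θ)).re) = 0 := by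
        have hint : IntervalIntegrable (fun θ : ℝ => A (circleMap 0 ρ θ))
            MeasureTheory.volume 0 (2 * Real.pi) := hcontA.intervalIntegrable _ _
        have := Complex.reCLM.intervalIntegral_comp_comm hint
        simp only [Complex.reCLM_apply] at this
        rw [this, hAmean]
        simp
      -- FTC: ∫ Re(t F'/F) dθ = 0
      have hFTC : (∫ θ in (0:ℝ)..(2 * Real.pi),
          (circleMap 0 ρ θ * deriv F (circleMap 0 ρ θ) / F (circleMap 0 ρ θ)).re) = 0 := by
        have key : ∀ θ : ℝ, HasDerivAt (fun θ : ℝ => (A (circleMap 0 ρ θ)).im)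
            ((circleMap 0 ρ θ * deriv F (circleMap 0 ρ θ) / F (circleMap 0 ρ θ)).re) θ := by
          intro θ
          set t : ℂ := circleMap 0 ρ θ with htdef
          have hFt : F t ≠ 0 := hFne t (htδ θ)
          have h1 : HasDerivAt (circleMap 0 ρ) (t * Complex.I) θ :=
            hasDerivAt_circleMap 0 ρ θ
          have h2 : HasDerivAt F (deriv F t) t :=
            (hF t (htr θ)).differentiableAt.hasDerivAt
          have h3 : HasDerivAt (fun z => F z / F 0) (deriv F t / F 0) t := h2.div_const _
          have h4 : HasDerivAt Complex.log (F t / F 0)⁻¹ (F t / F 0) :=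
            Complex.hasDerivAt_log (hslit t (htδ θ))
          have h5 : HasDerivAt (fun θ : ℝ => A (circleMap 0 ρ θ))
              ((F t / F 0)⁻¹ * (deriv F t / F 0) * (t * Complex.I)) θ :=
            by have h45 := (h4.comp t h3).comp θ h1; exact h45
          have h6 : HasDerivAt (fun θ : ℝ => (A (circleMap 0 ρ θ)).im)
              (((F t / F 0)⁻¹ * (deriv F t / F 0) * (t * Complex.I)).im) θ :=
            Complex.imCLM.hasFDerivAt.comp_hasDerivAt θ h5
          convert h6 using 1
          have : (F t / F 0)⁻¹ * (deriv F t / F 0) * (t * Complex.I)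
              = (t * deriv F t / F t) * Complex.I := by
            field_simp
          rw [this, Complex.mul_I_im]
        rw [intervalIntegral.integral_eq_sub_of_hasDerivAt (fun θ _ => key θ)
          (hcontR.intervalIntegrable _ _)]
        have hper : circleMap 0 ρ (2 * Real.pi) = circleMap 0 ρ 0 := by
          have := periodic_circleMap 0 ρ 0
          simpa using this
        rw [hper, sub_self]
      -- put everything together
      rw [intervalIntegral.integral_congr
        (g := fun θ : ℝ => (p : ℝ) * Real.log (norm (F 0))
          + (p : ℝ) * (A (circleMap 0 ρ θ)).re
          - ((p : ℝ) * Real.log ρ)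
            * (circleMap 0 ρ θ * deriv F (circleMap 0 ρ θ) / F (circleMap 0 ρ θ)).re)
        (fun θ _ => by rw [hcm θ]; exact point θ)]
      have hcg1 : Continuous fun θ : ℝ => (p : ℝ) * (A (circleMap 0 ρ θ)).re :=
        continuous_const.mul (Complex.continuous_re.comp hcontA)
      have hI1 : IntervalIntegrable
          (fun θ : ℝ => (p : ℝ) * Real.log (norm (F 0))
            + (p : ℝ) * (A (circleMap 0 ρ θ)).re) MeasureTheory.volume 0 (2 * Real.pi) :=
        (continuous_const.add hcg1).intervalIntegrable _ _
      have hI2 : IntervalIntegrable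
          (fun θ : ℝ => ((p : ℝ) * Real.log ρ)
            * (circleMap 0 ρ θ * deriv F (circleMap 0 ρ θ) / F (circleMap 0 ρ θ)).re)
          MeasureTheory.volume 0 (2 * Real.pi) :=
        (continuous_const.mul hcontR).intervalIntegrable _ _
      rw [intervalIntegral.integral_sub hI1 hI2,
        intervalIntegral.integral_add
          ((continuous_const (y := (p : ℝ)
            * Real.log (norm (F 0)))).intervalIntegrable _ _)
          (hcg1.intervalIntegrable _ _),
        intervalIntegral.integral_const,
        intervalIntegral.integral_const_mul, intervalIntegral.integral_const_mul,
        hAre, hFTC]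
      simp
      ring
    -- conclude the limit by eventual equality with the constant
    have hev : ∀ᶠ ρ in nhdsWithin (0:ℝ) (Set.Ioo 0 r),
        (fun ρ : ℝ =>
          ∫ θ in (0 : ℝ)..(2 * Real.pi),
            etaL (((ρ : ℂ) * Complex.exp (θ * Complex.I)) ^ p,
                  ((ρ : ℂ) * Complex.exp (θ * Complex.I)) ^ q
                    * F ((ρ : ℂ) * Complex.exp (θ * Complex.I)))
              ((p : ℂ) * ((ρ : ℂ) * Complex.exp (θ * Complex.I)) ^ p * Complex.I,
               ((q : ℂ) * F ((ρ : ℂ) * Complex.exp (θ * Complex.I))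
                  + ((ρ : ℂ) * Complex.exp (θ * Complex.I))
                    * deriv F ((ρ : ℂ) * Complex.exp (θ * Complex.I)))
                 * ((ρ : ℂ) * Complex.exp (θ * Complex.I)) ^ q * Complex.I)) ρ
          = 2 * Real.pi * p * Real.log (norm (F 0)) := by
      have hmem : Set.Ioo (0:ℝ) δ ∈ nhdsWithin (0:ℝ) (Set.Ioo 0 r) := by
        have h1 : Set.Iio δ ∈ nhds (0:ℝ) := Iio_mem_nhds hδpos
        have h2 : Set.Iio δ ∈ nhdsWithin (0:ℝ) (Set.Ioo 0 r) :=
          nhdsWithin_le_nhds h1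
        have h3 : Set.Ioo (0:ℝ) r ∈ nhdsWithin (0:ℝ) (Set.Ioo 0 r) :=
          self_mem_nhdsWithin
        filter_upwards [h2, h3] with ρ hρ1 hρ2
        exact ⟨hρ2.1, hρ1⟩
      filter_upwards [hmem] with ρ hρ using main ρ hρ
    exact Filter.Tendsto.congr' (Filter.EventuallyEq.symm hev) tendsto_const_nhds
  · -- the iff statement
    have hF0abs : 0 < norm (F 0) := norm_pos_iff.mpr hF0
    have habs : norm ((-1 : ℂ) ^ (p * q) * F 0 ^ (-p))
        = norm (F 0) ^ (-p) := by
      rw [norm_mul, norm_zpow, norm_zpow]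
      simp
    rw [habs]
    have hpow_pos : (0:ℝ) < norm (F 0) ^ (-p) := zpow_pos hF0abs _
    constructor
    · intro h
      have h2π : (2 * Real.pi) ≠ 0 := by positivity
      have hpl : (p : ℝ) * Real.log (norm (F 0)) = 0 := by
        have : 2 * Real.pi * ((p : ℝ) * Real.log (norm (F 0))) = 0 := by
          rw [← h]; ring
        exact (mul_eq_zero.1 this).resolve_left h2π
      have : Real.log (norm (F 0) ^ (-p)) = 0 := by
        rw [Real.log_zpow]
        push_cast
        linarith [hpl]
      rcases Real.log_eq_zero.1 this with h' | h' | h'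
      · exact absurd h' hpow_pos.ne'
      · exact h'
      · linarith [hpow_pos]
    · intro h
      have : Real.log (norm (F 0) ^ (-p)) = 0 := by rw [h, Real.log_one]
      rw [Real.log_zpow] at this
      have hpl : (p : ℝ) * Real.log (norm (F 0)) = 0 := by
        push_cast at this
        linarith
      rw [show 2 * Real.pi * (p : ℝ) * Real.log (norm (F 0))
        = 2 * Real.pi * ((p : ℝ) * Real.log (norm (F 0))) by ring, hpl, mul_zero]
end
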